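/- Let t > 2 be an integer and let G = ℤ_{2t+1}. The family S′ of the t−1 sets {2,3}, {4,5}, …, {2t−2, 2t−1} is a (2t+1, t−1, 2, 0, t−1)-DPDF in G, and there exist no integers λ, μ for which S′ is a (2t+1, t−1, 2, λ, μ)-EPDF in G. -/
import Mathlib


open Finset

/-- The multiset of internal differences of a finite subset of an additive group. -/
def dInt {G : Type*} [AddGroup G] [DecidableEq G] (D : Finset G) : Multiset G :=
  ((D ×ˢ D).filter fun p => p.1 ≠ p.2).val.map fun p => p.1 - p.2

/-- The multiset of external differences between two finite subsets of an additive group. -/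
def dExt {G : Type*} [AddGroup G] (D₁ D₂ : Finset G) : Multiset G :=
  (D₁ ×ˢ D₂).val.map fun p => p.1 - p.2

/-- The multiset union of the internal differences of a family of sets. -/
def IntFam {G : Type*} [AddGroup G] [DecidableEq G] {ι : Type*} [Fintype ι]
    (A : ι → Finset G) : Multiset G :=
  ∑ i, dInt (A i)

/-- The multiset union of external differences over ordered pairs of distinct sets. -/
def ExtFam {G : Type*} [AddGroup G] [DecidableEq G] {ι : Type*} [Fintype ι] [DecidableEq ι]
    (A : ι → Finset G) : Multiset G :=
  ∑ i, ∑ j ∈ Finset.univ.erase i, dExt (A i) (A j)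

/-- A `(v,s,k,lam,mu)`-disjoint partial difference family in the additive group `G`. -/
def IsDPDF (G : Type*) [AddGroup G] [Fintype G] [DecidableEq G] {ι : Type*} [Fintype ι]
    (v s k lam mu : ℕ) (A : ι → Finset G) : Prop :=
  Fintype.card G = v ∧ Fintype.card ι = s ∧
  (∀ i, (A i).card = k) ∧ (∀ i, (0 : G) ∉ A i) ∧
  (∀ i j, i ≠ j → Disjoint (A i) (A j)) ∧
  (∀ g : G, g ≠ 0 → (∃ i, g ∈ A i) → (IntFam A).count g = lam) ∧
  (∀ g : G, g ≠ 0 → (∀ i, g ∉ A i) → (IntFam A).count g = mu)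

/-- A `(v,s,k,lam,mu)`-external partial difference family in the additive group `G`. -/
def IsEPDF (G : Type*) [AddGroup G] [Fintype G] [DecidableEq G] {ι : Type*} [Fintype ι]
    [DecidableEq ι] (v s k lam mu : ℕ) (A : ι → Finset G) : Prop :=
  Fintype.card G = v ∧ Fintype.card ι = s ∧
  (∀ i, (A i).card = k) ∧ (∀ i, (0 : G) ∉ A i) ∧
  (∀ i j, i ≠ j → Disjoint (A i) (A j)) ∧
  (∀ g : G, g ≠ 0 → (∃ i, g ∈ A i) → (ExtFam A).count g = lam) ∧
  (∀ g : G, g ≠ 0 → (∀ i, g ∉ A i) → (ExtFam A).count g = mu)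


lemma count_dExt {G : Type*} [AddGroup G] [DecidableEq G] (D₁ D₂ : Finset G) (g : G) :
    (dExt D₁ D₂).count g = (D₂.filter fun y => g + y ∈ D₁).card := by
  unfold dExt
  rw [Multiset.count_map]
  have h : Multiset.filter (fun p => g = p.1 - p.2) (D₁ ×ˢ D₂).val
      = ((D₁ ×ˢ D₂).filter (fun p => g = p.1 - p.2)).val := (Finset.filter_val _ _).symm
  rw [h]
  show ((D₁ ×ˢ D₂).filter (fun p => g = p.1 - p.2)).card = _
  apply Finset.card_bij' (fun p _ => p.2) (fun y _ => (g + y, y))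
  · intro p hp
    simp only [Finset.mem_filter, Finset.mem_product] at hp ⊢
    obtain ⟨⟨h1, h2⟩, h3⟩ := hp
    refine ⟨h2, ?_⟩
    have : g + p.2 = p.1 := by rw [h3]; exact sub_add_cancel _ _
    rwa [this]
  · intro y hy
    simp only [Finset.mem_filter] at hy ⊢
    refine ⟨Finset.mem_product.2 ⟨hy.2, hy.1⟩, by simp⟩
  · intro p hp
    simp only [Finset.mem_filter, Finset.mem_product] at hp
    have : g + p.2 = p.1 := by rw [hp.2]; exact sub_add_cancel _ _
    simp [this]
  · intro y hy; rfl

lemma count_dInt {G : Type*} [AddGroup G] [DecidableEq G] (D : Finset G) {g : G} (hg : g ≠ 0) :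
    (dInt D).count g = (dExt D D).count g := by
  unfold dInt dExt
  rw [Multiset.count_map, Multiset.count_map]
  congr 1
  rw [Finset.filter_val, Multiset.filter_filter]
  apply Multiset.filter_congr
  intro p _
  constructor
  · exact fun h => h.1
  · intro h
    refine ⟨h, fun he => hg ?_⟩
    rw [h, he, sub_self]

lemma card_filter_pair {α : Type*} [DecidableEq α] {a b : α} (h : a ≠ b)
    (P : α → Prop) [DecidablePred P] :
    (({a, b} : Finset α).filter P).card
      = (if P a then 1 else 0) + (if P b then 1 else 0) := by
  rw [Finset.filter_insert, Finset.filter_singleton]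
  split_ifs <;> simp_all

lemma cast_eq_cast_iff {t : ℕ} (ht : 0 < t) {m c : ℕ} (hm : m < 2*(2*t+1)) (hc : c < 2*t+1) :
    ((m : ZMod (2*t+1)) = (c : ZMod (2*t+1))) ↔ m = c ∨ m = c + (2*t+1) := by
  rw [ZMod.natCast_eq_natCast_iff, Nat.ModEq, Nat.mod_eq_of_lt hc]
  rcases lt_or_ge m (2*t+1) with h | h
  · rw [Nat.mod_eq_of_lt h]; omega
  · rw [Nat.mod_eq_sub_mod h, Nat.mod_eq_of_lt (by omega)]; omega

lemma sum_pair_shift (N : ℕ) (d : ℕ) (hd : 0 < d) (c : ℕ) :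
    (∑ i : Fin N, ∑ j ∈ Finset.univ.erase i, if (i:ℕ) = (j:ℕ) + d then c else 0)
      = (N - d) * c := by
  have h1 : ∀ i : Fin N, (∑ j ∈ Finset.univ.erase i, if (i:ℕ) = (j:ℕ) + d then c else 0)
      = ∑ j : Fin N, if (i:ℕ) = (j:ℕ) + d then c else 0 := by
    intro i
    apply Finset.sum_erase
    rw [if_neg]; omega
  rw [Finset.sum_congr rfl fun i _ => h1 i, Finset.sum_comm]
  have h2 : ∀ j : Fin N, (∑ i : Fin N, if (i:ℕ) = (j:ℕ) + d then c else 0)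
      = if (j:ℕ) + d < N then c else 0 := by
    intro j
    rw [Fin.sum_univ_eq_sum_range (fun k => if k = (j:ℕ)+d then c else 0) N]
    rw [Finset.sum_ite_eq' (Finset.range N) ((j:ℕ)+d) (fun _ => c)]
    simp [Finset.mem_range]
  rw [Finset.sum_congr rfl fun j _ => h2 j]
  rw [Fin.sum_univ_eq_sum_range (fun k => if k + d < N then c else 0) N]
  have h3 : ∀ k ∈ Finset.range N, (if k + d < N then c else 0)
      = if k ∈ Finset.range (N-d) then c else 0 := by
    intro k hk
    exact if_congr (by rw [Finset.mem_range]; omega) rfl rfl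
  rw [Finset.sum_congr rfl h3, Finset.sum_ite_mem]
  have h4 : Finset.range N ∩ Finset.range (N-d) = Finset.range (N-d) := by
    ext x; simp only [Finset.mem_inter, Finset.mem_range]; omega
  rw [h4, Finset.sum_const, Finset.card_range, smul_eq_mul]

/-- for `t > 2`, in `G = ℤ_{2t+1}` the family of the `t−1` sets
`{2,3}, {4,5}, …, {2t−2, 2t−1}` is a `(2t+1, t−1, 2, 0, t−1)`-DPDF which is not a
`(2t+1, t−1, 2, λ, μ)`-EPDF for any `λ, μ`. -/
theorem dpdf_not_epdf (t : ℕ) (ht : 2 < t)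
    (A : Fin (t - 1) → Finset (ZMod (2 * t + 1)))
    (hA : ∀ i : Fin (t - 1),
      A i = {((2 * (i : ℕ) + 2 : ℕ) : ZMod (2 * t + 1)),
             ((2 * (i : ℕ) + 3 : ℕ) : ZMod (2 * t + 1))}) :
    IsDPDF (ZMod (2 * t + 1)) (2 * t + 1) (t - 1) 2 0 (t - 1) A ∧
    ∀ lam mu : ℕ, ¬ IsEPDF (ZMod (2 * t + 1)) (2 * t + 1) (t - 1) 2 lam mu A := by
  have ht0 : 0 < t := by omega
  haveI : NeZero (2 * t + 1) := ⟨by omega⟩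
  -- membership characterization
  have mem_A : ∀ (i : Fin (t-1)) (m : ℕ), m < 2*(2*t+1) →
      (((m : ℕ) : ZMod (2*t+1)) ∈ A i ↔
        (m = 2*(i:ℕ)+2 ∨ m = 2*(i:ℕ)+2+(2*t+1) ∨ m = 2*(i:ℕ)+3 ∨ m = 2*(i:ℕ)+3+(2*t+1))) := by
    intro i m hm
    have hi := i.isLt
    rw [hA i]
    simp only [Finset.mem_insert, Finset.mem_singleton]
    rw [cast_eq_cast_iff ht0 hm (by omega), cast_eq_cast_iff ht0 hm (by omega)]
    tauto
  have hcast_add : ∀ (m k : ℕ),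
      ((m : ZMod (2*t+1)) + (k : ZMod (2*t+1))) = ((m + k : ℕ) : ZMod (2*t+1)) := by
    intro m k; push_cast; ring
  have hmemadd : ∀ (i : Fin (t-1)) (m k : ℕ), m + k < 2*(2*t+1) →
      (((m : ZMod (2*t+1)) + (k : ZMod (2*t+1)) ∈ A i) ↔
        (m+k = 2*(i:ℕ)+2 ∨ m+k = 2*(i:ℕ)+2+(2*t+1) ∨ m+k = 2*(i:ℕ)+3 ∨ m+k = 2*(i:ℕ)+3+(2*t+1))) := by
    intro i m k hmk
    rw [hcast_add, mem_A i _ hmk]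
  have hne : ∀ j : Fin (t-1),
      ((2*(j:ℕ)+2 : ℕ) : ZMod (2*t+1)) ≠ ((2*(j:ℕ)+3 : ℕ) : ZMod (2*t+1)) := by
    intro j h
    have hj := j.isLt
    rw [cast_eq_cast_iff ht0 (by omega) (by omega)] at h
    omega
  have hcast_ne_zero : ∀ m : ℕ, 0 < m → m < 2*t+1 → ((m : ℕ) : ZMod (2*t+1)) ≠ 0 := by
    intro m hm1 hm2 h
    rw [show (0 : ZMod (2*t+1)) = ((0:ℕ) : ZMod (2*t+1)) from (Nat.cast_zero).symm,
      cast_eq_cast_iff ht0 (by omega) (by omega)] at h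
    omega
  -- count formula for IntFam
  have hcount : ∀ g : ZMod (2*t+1), g ≠ 0 → (IntFam A).count g
      = ∑ i : Fin (t-1),
          ((if g + ((2*(i:ℕ)+2 : ℕ) : ZMod (2*t+1)) ∈ A i then 1 else 0)
            + (if g + ((2*(i:ℕ)+3 : ℕ) : ZMod (2*t+1)) ∈ A i then 1 else 0)) := by
    intro g hg
    unfold IntFam
    rw [Multiset.count_sum']
    refine Finset.sum_congr rfl fun i _ => ?_
    rw [count_dInt _ hg, count_dExt]
    simp only [hA i]
    exact card_filter_pair (hne i) _
  have hcountE : ∀ g : ZMod (2*t+1), (ExtFam A).count g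
      = ∑ i : Fin (t-1), ∑ j ∈ Finset.univ.erase i,
          ((if g + ((2*(j:ℕ)+2 : ℕ) : ZMod (2*t+1)) ∈ A i then 1 else 0)
            + (if g + ((2*(j:ℕ)+3 : ℕ) : ZMod (2*t+1)) ∈ A i then 1 else 0)) := by
    intro g
    unfold ExtFam
    rw [Multiset.count_sum']
    refine Finset.sum_congr rfl fun i _ => ?_
    rw [Multiset.count_sum']
    refine Finset.sum_congr rfl fun j _ => ?_
    rw [count_dExt]
    conv_lhs => rw [hA j]
    exact card_filter_pair (hne j) _
  constructor
  · refine ⟨ZMod.card _, Fintype.card_fin _, ?_, ?_, ?_, ?_, ?_⟩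
    · -- card = 2
      intro i
      rw [hA i, Finset.card_insert_of_notMem (Finset.notMem_singleton.mpr (hne i)),
        Finset.card_singleton]
    · -- 0 ∉ A i
      intro i h
      have h' : ((0:ℕ) : ZMod (2*t+1)) ∈ A i := by simpa using h
      rw [mem_A i 0 (by omega)] at h'
      have hi := i.isLt
      omega
    · -- disjoint
      intro i j hij
      rw [Finset.disjoint_left]
      intro g hgi hgj
      have hi := i.isLt
      have hj := j.isLt
      have hij' : (i:ℕ) ≠ (j:ℕ) := fun h => hij (Fin.ext h)
      rw [hA i, Finset.mem_insert, Finset.mem_singleton] at hgi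
      rcases hgi with rfl | rfl <;>
        · rw [mem_A j _ (by omega)] at hgj
          omega
    · -- lam = 0
      intro g hg hex
      obtain ⟨i₀, hgi⟩ := hex
      rw [hA i₀, Finset.mem_insert, Finset.mem_singleton] at hgi
      have hi0 := i₀.isLt
      obtain ⟨m, hm2, hmlt, rfl⟩ : ∃ m : ℕ, 2 ≤ m ∧ m < 2*t ∧ g = (m : ZMod (2*t+1)) := by
        rcases hgi with rfl | rfl
        exacts [⟨2*(i₀:ℕ)+2, by omega, by omega, rfl⟩, ⟨2*(i₀:ℕ)+3, by omega, by omega, rfl⟩]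
      rw [hcount _ hg]
      apply Finset.sum_eq_zero
      intro i _
      have hi := i.isLt
      have e1 := hmemadd i m (2*(i:ℕ)+2) (by omega)
      have e2 := hmemadd i m (2*(i:ℕ)+3) (by omega)
      rw [if_neg (fun hmem => by have := e1.mp hmem; omega),
        if_neg (fun hmem => by have := e2.mp hmem; omega)]
      rfl
    · -- mu = t-1
      intro g hg hnot
      obtain ⟨m, hmlt, rfl⟩ : ∃ m : ℕ, m < 2*t+1 ∧ g = ((m : ℕ) : ZMod (2*t+1)) :=
        ⟨g.val, ZMod.val_lt g, (ZMod.natCast_rightInverse g).symm⟩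
      have hm0 : m ≠ 0 := by
        rintro rfl
        exact hg Nat.cast_zero
      have hm : m = 1 ∨ m = 2*t := by
        by_contra hc
        push_neg at hc
        refine hnot ⟨(m - 2)/2, by omega⟩ ?_
        rw [mem_A _ _ (by omega)]
        have : ((⟨(m - 2)/2, by omega⟩ : Fin (t-1)) : ℕ) = (m - 2)/2 := rfl
        rw [this]
        omega
      rw [hcount _ hg]
      have hsum : ∀ v : ℕ, (∑ _i : Fin (t-1), v) = (t-1) * v := by
        intro v
        rw [Finset.sum_const, Finset.card_univ, Fintype.card_fin, smul_eq_mul]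
      rcases hm with rfl | rfl
      · have hterm : ∀ i : Fin (t-1),
            ((if ((1:ℕ) : ZMod (2*t+1)) + ((2*(i:ℕ)+2 : ℕ) : ZMod (2*t+1)) ∈ A i then 1 else 0)
              + (if ((1:ℕ) : ZMod (2*t+1)) + ((2*(i:ℕ)+3 : ℕ) : ZMod (2*t+1)) ∈ A i then 1 else 0)) = 1 := by
          intro i
          have hi := i.isLt
          have e1 := hmemadd i 1 (2*(i:ℕ)+2) (by omega)
          have e2 := hmemadd i 1 (2*(i:ℕ)+3) (by omega)
          rw [if_pos (e1.mpr (by omega)),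
            if_neg (fun hmem => by have := e2.mp hmem; omega)]
        rw [Finset.sum_congr rfl fun i _ => hterm i, hsum 1, mul_one]
      · have hterm : ∀ i : Fin (t-1),
            ((if ((2*t:ℕ) : ZMod (2*t+1)) + ((2*(i:ℕ)+2 : ℕ) : ZMod (2*t+1)) ∈ A i then 1 else 0)
              + (if ((2*t:ℕ) : ZMod (2*t+1)) + ((2*(i:ℕ)+3 : ℕ) : ZMod (2*t+1)) ∈ A i then 1 else 0)) = 1 := by
          intro i
          have hi := i.isLt
          have e1 := hmemadd i (2*t) (2*(i:ℕ)+2) (by omega)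
          have e2 := hmemadd i (2*t) (2*(i:ℕ)+3) (by omega)
          rw [if_neg (fun hmem => by have := e1.mp hmem; omega),
            if_pos (e2.mpr (by omega))]
        rw [Finset.sum_congr rfl fun i _ => hterm i, hsum 1, mul_one]
  · -- not EPDF
    intro lam mu hE
    obtain ⟨-, -, -, -, -, h6, -⟩ := hE
    have h2 : (ExtFam A).count ((2:ℕ) : ZMod (2*t+1)) = lam := by
      refine h6 _ (hcast_ne_zero 2 (by omega) (by omega)) ⟨⟨0, by omega⟩, ?_⟩
      rw [mem_A _ 2 (by omega)]
      have : ((⟨0, by omega⟩ : Fin (t-1)) : ℕ) = 0 := rfl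
      rw [this]
      omega
    have h3 : (ExtFam A).count ((3:ℕ) : ZMod (2*t+1)) = lam := by
      refine h6 _ (hcast_ne_zero 3 (by omega) (by omega)) ⟨⟨0, by omega⟩, ?_⟩
      rw [mem_A _ 3 (by omega)]
      have : ((⟨0, by omega⟩ : Fin (t-1)) : ℕ) = 0 := rfl
      rw [this]
      omega
    have hc2 : (ExtFam A).count ((2:ℕ) : ZMod (2*t+1)) = ((t-1) - 1) * 2 := by
      rw [hcountE]
      have hterm : ∀ i j : Fin (t-1),
          ((if ((2:ℕ) : ZMod (2*t+1)) + ((2*(j:ℕ)+2 : ℕ) : ZMod (2*t+1)) ∈ A i then 1 else 0)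
            + (if ((2:ℕ) : ZMod (2*t+1)) + ((2*(j:ℕ)+3 : ℕ) : ZMod (2*t+1)) ∈ A i then 1 else 0))
          = if (i:ℕ) = (j:ℕ) + 1 then 2 else 0 := by
        intro i j
        have hi := i.isLt
        have hj := j.isLt
        have e1 := hmemadd i 2 (2*(j:ℕ)+2) (by omega)
        have e2 := hmemadd i 2 (2*(j:ℕ)+3) (by omega)
        by_cases h : (i:ℕ) = (j:ℕ) + 1
        · rw [if_pos (e1.mpr (by omega)), if_pos (e2.mpr (by omega)), if_pos h]
        · rw [if_neg (fun hmem => h (by have := e1.mp hmem; omega)),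
            if_neg (fun hmem => h (by have := e2.mp hmem; omega)), if_neg h]
      rw [Finset.sum_congr rfl fun i _ =>
        Finset.sum_congr rfl fun j _ => hterm i j]
      exact sum_pair_shift (t-1) 1 (by omega) 2
    have hc3 : (ExtFam A).count ((3:ℕ) : ZMod (2*t+1)) = ((t-1) - 1) * 1 + ((t-1) - 2) * 1 := by
      rw [hcountE]
      have hterm : ∀ i j : Fin (t-1),
          ((if ((3:ℕ) : ZMod (2*t+1)) + ((2*(j:ℕ)+2 : ℕ) : ZMod (2*t+1)) ∈ A i then 1 else 0)
            + (if ((3:ℕ) : ZMod (2*t+1)) + ((2*(j:ℕ)+3 : ℕ) : ZMod (2*t+1)) ∈ A i then 1 else 0))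
          = (if (i:ℕ) = (j:ℕ) + 1 then 1 else 0) + (if (i:ℕ) = (j:ℕ) + 2 then 1 else 0) := by
        intro i j
        have hi := i.isLt
        have hj := j.isLt
        have e1 := hmemadd i 3 (2*(j:ℕ)+2) (by omega)
        have e2 := hmemadd i 3 (2*(j:ℕ)+3) (by omega)
        by_cases h1 : (i:ℕ) = (j:ℕ) + 1
        · rw [if_pos (e1.mpr (by omega)),
            if_neg (fun hmem => by have := e2.mp hmem; omega),
            if_pos h1, if_neg (by omega)]
        · by_cases h2 : (i:ℕ) = (j:ℕ) + 2
          · rw [if_neg (fun hmem => h1 (by have := e1.mp hmem; omega)),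
              if_pos (e2.mpr (by omega)), if_neg h1, if_pos h2]
          · rw [if_neg (fun hmem => h1 (by have := e1.mp hmem; omega)),
              if_neg (fun hmem => h2 (by have := e2.mp hmem; omega)),
              if_neg h1, if_neg h2]
      rw [Finset.sum_congr rfl fun i _ =>
        Finset.sum_congr rfl fun j _ => hterm i j]
      rw [Finset.sum_congr rfl fun i (_ : i ∈ Finset.univ) => Finset.sum_add_distrib,
        Finset.sum_add_distrib]
      rw [sum_pair_shift (t-1) 1 (by omega) 1, sum_pair_shift (t-1) 2 (by omega) 1]
    omega
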